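/- In the associative unital ℂ-algebra TL generated by elements {θ_k : k ∈ ℤ} subject to the relations θ_k² = 0, θ_k θ_{k±1} θ_k = θ_k, and θ_k θ_j = θ_j θ_k whenever |k−j| > 1: if I = (i₁,…,i_m) is a reduced sequence (i.e. θ_{i_m}⋯θ_{i_1} ≠ 0 and no shorter sequence yields the same element), then the maximal value max{i ∈ I} occurs exactly once in I. The same holds for the minimal value. -/

import Mathlib

section Aux
variable {A : Type*} [Ring A]

lemma tl_split1 {α : Type*} [DecidableEq α] {a : α} {l : List α} (h : a ∈ l) :
    ∃ s t, l = s ++ a :: t ∧ a ∉ s := by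
  induction l with
  | nil => simp at h
  | cons x xs ih =>
    by_cases hx : x = a
    · exact ⟨[], xs, by simp [hx], by simp⟩
    · rcases List.mem_cons.mp h with h' | h'
      · exact absurd h'.symm hx
      · obtain ⟨s, t, rfl, hs⟩ := ih h'
        refine ⟨x :: s, t, rfl, ?_⟩
        intro hmem
        rcases List.mem_cons.mp hmem with h'' | h''
        · exact hx h''.symm
        · exact hs h''

lemma tl_split2 {a : ℤ} {l : List ℤ} (h : 2 ≤ l.count a) :
    ∃ P B S, l = P ++ a :: B ++ a :: S ∧ a ∉ B := by
  have hmem : a ∈ l := List.count_pos_iff.mp (by omega)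
  obtain ⟨P, t, rfl, hP⟩ := tl_split1 hmem
  have hcount : a ∈ t := by
    by_contra hn
    have h0 : (P ++ a :: t).count a = 1 := by
      simp [List.count_append, List.count_eq_zero_of_not_mem hP, List.count_cons,
        List.count_eq_zero_of_not_mem hn]
    omega
  obtain ⟨B, S, rfl, hB⟩ := tl_split1 hcount
  exact ⟨P, B, S, by simp, hB⟩

lemma tl_comm (θ : ℤ → A) (h3 : ∀ k j, 1 < |k - j| → θ k * θ j = θ j * θ k)
    (k : ℤ) : ∀ B : List ℤ, (∀ j ∈ B, 1 < |k - j|) →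
    θ k * (B.map θ).prod = (B.map θ).prod * θ k := by
  intro B
  induction B with
  | nil => simp
  | cons x xs ih =>
    intro h
    simp only [List.map_cons, List.prod_cons]
    rw [← mul_assoc, h3 k x (h x (by simp)), mul_assoc,
      ih (fun j hj => h j (by simp [hj])), ← mul_assoc]

lemma tl_swap (p q x y : A) (hp : x * p = p * x) (hq : x * q = q * x) :
    x * (p * (y * q)) * x = p * (x * y * x * q) := by
  simp only [mul_assoc]
  rw [← hq, ← mul_assoc x p, hp]
  simp only [mul_assoc]

lemma tl_maxOnce (θ : ℤ → A)
    (h1 : ∀ k, θ k * θ k = 0)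
    (h2' : ∀ k, θ k * θ (k - 1) * θ k = θ k)
    (h3 : ∀ k j, 1 < |k - j| → θ k * θ j = θ j * θ k) :
    ∀ n (I : List ℤ), I.length ≤ n → (I.map θ).prod ≠ 0 →
    (∀ J : List ℤ, (J.map θ).prod = (I.map θ).prod → I.length ≤ J.length) →
    ∀ mx ∈ I, (∀ i ∈ I, i ≤ mx) → I.count mx = 1 := by
  intro n
  induction n with
  | zero =>
    intro I hl _ _ mx hmem _
    rw [List.length_eq_zero_iff.mp (Nat.le_zero.mp hl)] at hmem
    simp at hmem
  | succ n ih =>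
    intro I hlen hnz hred mx hmem hmax
    by_contra hc
    have hge : 2 ≤ I.count mx := by
      have : 0 < I.count mx := List.count_pos_iff.mpr hmem
      omega
    obtain ⟨P, B, S, hI, hBmx⟩ := tl_split2 hge
    have hprodI : (I.map θ).prod =
        (P.map θ).prod * ((θ mx * (B.map θ).prod * θ mx) * (S.map θ).prod) := by
      rw [hI]; simp [List.map_append, List.prod_append, mul_assoc]
    have hBle : ∀ j ∈ B, j ≤ mx - 1 := by
      intro j hj
      have h1' : j ≤ mx := hmax j (by rw [hI]; simp [hj])
      have h2'' : j ≠ mx := fun h => hBmx (h ▸ hj)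
      omega
    by_cases hc0 : B.count (mx - 1) = 0
    · -- no mx-1 in B : product is zero
      have hcomm : θ mx * (B.map θ).prod = (B.map θ).prod * θ mx := by
        apply tl_comm θ h3
        intro j hj
        have : j ≤ mx - 2 := by
          have := hBle j hj
          have : j ≠ mx - 1 := fun h => (List.count_eq_zero.mp hc0) (h ▸ hj)
          omega
        rw [abs_of_nonneg (by omega : (0:ℤ) ≤ mx - j)]; omega
      have : (I.map θ).prod = 0 := by
        rw [hprodI, hcomm, mul_assoc _ (θ mx) (θ mx), h1, mul_zero, zero_mul, mul_zero]
      exact hnz this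
    · by_cases hc1 : B.count (mx - 1) = 1
      · -- exactly one mx-1 : shorten the word
        have hmem1 : (mx - 1) ∈ B := List.count_pos_iff.mp (by omega)
        obtain ⟨B1, B2, hBsplit, hB1⟩ := tl_split1 hmem1
        have hB2 : (mx - 1) ∉ B2 := by
          intro h
          rw [hBsplit] at hc1
          simp [List.count_append, List.count_cons,
            List.count_eq_zero_of_not_mem hB1] at hc1
          exact absurd hc1 (by
            have := List.count_pos_iff.mpr h
            omega)
        have hfar : ∀ (C : List ℤ), (mx - 1) ∉ C → (∀ j ∈ C, j ∈ B) →
            θ mx * (C.map θ).prod = (C.map θ).prod * θ mx := by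
          intro C hC hCB
          apply tl_comm θ h3
          intro j hj
          have : j ≤ mx - 2 := by
            have := hBle j (hCB j hj)
            have : j ≠ mx - 1 := fun h => hC (h ▸ hj)
            omega
          rw [abs_of_nonneg (by omega : (0:ℤ) ≤ mx - j)]; omega
        have c1 : θ mx * (B1.map θ).prod = (B1.map θ).prod * θ mx :=
          hfar B1 hB1 (fun j hj => by rw [hBsplit]; simp [hj])
        have c2 : θ mx * (B2.map θ).prod = (B2.map θ).prod * θ mx :=
          hfar B2 hB2 (fun j hj => by rw [hBsplit]; simp [hj])
        have hPB : (B.map θ).prod =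
            (B1.map θ).prod * (θ (mx - 1) * (B2.map θ).prod) := by
          rw [hBsplit]; simp [List.map_append, List.prod_append, mul_assoc]
        have key : θ mx * (B.map θ).prod * θ mx =
            (B1.map θ).prod * (θ mx * (B2.map θ).prod) := by
          rw [hPB, tl_swap _ _ _ _ c1 c2, h2' mx]
        -- shorter word
        set J : List ℤ := P ++ B1 ++ mx :: B2 ++ S with hJ
        have hprodJ : (J.map θ).prod = (I.map θ).prod := by
          rw [hprodI, key, hJ]
          simp [List.map_append, List.prod_append, mul_assoc]
        have hlenJ := hred J hprodJ
        rw [hI, hBsplit, hJ] at hlenJ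
        simp [List.length_append] at hlenJ
      · -- at least two mx-1 in B : contradiction by IH on B
        have hge2 : 2 ≤ B.count (mx - 1) := by
          have : 0 ≤ B.count (mx - 1) := Nat.zero_le _
          omega
        have hPBnz : (B.map θ).prod ≠ 0 := by
          intro h
          apply hnz
          rw [hprodI, h, mul_zero, zero_mul, zero_mul, mul_zero]
        have hBred : ∀ K : List ℤ, (K.map θ).prod = (B.map θ).prod →
            B.length ≤ K.length := by
          intro K hK
          have hprodJ' : ((P ++ mx :: K ++ mx :: S).map θ).prod = (I.map θ).prod := by
            rw [hprodI, ← hK]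
            simp [List.map_append, List.prod_append, mul_assoc]
          have := hred _ hprodJ'
          rw [hI] at this
          simp [List.length_append] at this
          omega
        have hBlen : B.length ≤ n := by
          have : I.length = P.length + 1 + B.length + 1 + S.length := by
            rw [hI]; simp [List.length_append]; omega
          omega
        have := ih B hBlen hPBnz hBred (mx - 1) (List.count_pos_iff.mp (by omega)) hBle
        omega

end Aux

/-- in the Temperley–Lieb algebra `TL_∞(√−1)` (any ℂ-algebra with
elements `θ_k`, `k ∈ ℤ`, satisfying `θ_k² = 0`, `θ_k θ_{k±1} θ_k = θ_k`, and
`θ_k θ_j = θ_j θ_k` for `|k−j| > 1`), a reduced sequence `I` (with `θ_I ≠ 0` and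
no shorter sequence giving the same element) contains its maximal value exactly
once, and likewise its minimal value. -/
theorem stmt14 (A : Type*) [Ring A] [Algebra ℂ A] (θ : ℤ → A)
    (h1 : ∀ k, θ k * θ k = 0)
    (h2 : ∀ k, θ k * θ (k + 1) * θ k = θ k)
    (h2' : ∀ k, θ k * θ (k - 1) * θ k = θ k)
    (h3 : ∀ k j, 1 < |k - j| → θ k * θ j = θ j * θ k)
    (I : List ℤ)
    (hnz : (I.map θ).prod ≠ 0)
    (hred : ∀ J : List ℤ, (J.map θ).prod = (I.map θ).prod → I.length ≤ J.length) :
    (∀ mx ∈ I, (∀ i ∈ I, i ≤ mx) → I.count mx = 1) ∧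
    (∀ mn ∈ I, (∀ i ∈ I, mn ≤ i) → I.count mn = 1) := by
  constructor
  · intro mx hmem hmax
    exact tl_maxOnce θ h1 h2' h3 I.length I le_rfl hnz hred mx hmem hmax
  · intro mn hmem hmin
    -- negate everything
    set θ' : ℤ → A := fun k => θ (-k) with hθ'
    have hmapeq : ∀ K : List ℤ, ((K.map (fun i => -i)).map θ').prod = (K.map θ).prod := by
      intro K
      congr 1
      rw [List.map_map]
      apply List.map_congr_left
      intro i _
      simp [hθ']
    have h1' : ∀ k, θ' k * θ' k = 0 := fun k => h1 (-k)
    have h2'new : ∀ k, θ' k * θ' (k - 1) * θ' k = θ' k := by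
      intro k
      have := h2 (-k)
      simpa [hθ', show -(k - 1) = -k + 1 from by ring] using this
    have h3' : ∀ k j, 1 < |k - j| → θ' k * θ' j = θ' j * θ' k := by
      intro k j h
      apply h3
      rw [show -k - -j = -(k - j) by ring, abs_neg]
      exact h
    set I' : List ℤ := I.map (fun i => -i) with hI'
    have hnz' : (I'.map θ').prod ≠ 0 := by rw [hI', hmapeq]; exact hnz
    have hmapeq2 : ∀ K : List ℤ, (K.map θ').prod = ((K.map (fun i => -i)).map θ).prod := by
      intro K
      rw [List.map_map]
      rfl
    have hred' : ∀ J : List ℤ, (J.map θ').prod = (I'.map θ').prod →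
        I'.length ≤ J.length := by
      intro J hJ
      rw [hmapeq2, hI', hmapeq] at hJ
      have := hred (J.map (fun i => -i)) hJ
      simpa [hI'] using this
    have hmem' : (-mn) ∈ I' := by
      rw [hI']; exact List.mem_map.mpr ⟨mn, hmem, rfl⟩
    have hmax' : ∀ i ∈ I', i ≤ -mn := by
      intro i hi
      rw [hI'] at hi
      obtain ⟨j, hj, rfl⟩ := List.mem_map.mp hi
      have := hmin j hj
      omega
    have hcnt := tl_maxOnce θ' h1' h2'new h3' I'.length I' le_rfl hnz' hred' (-mn) hmem' hmax'
    rw [hI'] at hcnt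
    rw [show -mn = (fun i : ℤ => -i) mn from rfl] at hcnt
    rwa [List.count_map_of_injective _ _ neg_injective] at hcnt
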